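/- Let k > 1. If 1 ≤ τ₁, τ₂ ≤ N−1 and τ₁ ≡ τ₂ (mod 4(2^k+1)), then the autocorrelation values of the Yu-Gong sequence s satisfy AC_s(τ₁) = AC_s(τ₂). In particular, AC_s(4(2^k+1)i) = −4 for every i with 1 ≤ i ≤ 2^k − 2. -/

import Mathlib

open Finset

private def ygeps (z : ZMod 2) : ℤ := if z = 0 then 1 else -1

private lemma ygeps_add_one : ∀ z : ZMod 2, ygeps (z + 1) = - ygeps z := by decide

private lemma ygeps_if : ∀ u v : ZMod 2, (if u = v then (4:ℤ) else -4) = 4 * ygeps (u + v) := by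
  decide

private lemma yg_sum_decomp {M : Type*} [AddCommMonoid M] (f : ℕ → M) (m n : ℕ) :
    ∑ t ∈ range (m*n), f t = ∑ i ∈ range m, ∑ j ∈ range n, f (i*n+j) := by
  induction m with
  | zero => simp
  | succ m ih =>
    rw [Nat.succ_mul, Finset.sum_range_succ]
    rw [show ∑ t ∈ range (m*n+n), f t = ∑ t ∈ range (m*n), f t + ∑ j ∈ range n, f (m*n + j) by
      rw [Finset.sum_range_add]]
    rw [ih]

private lemma yg_inner (A C : ℤ) (β γ : ZMod 2) :
    ∑ i ∈ range 4, (if ((if (((i:ℕ):ℤ)+A)%4 = 0 then (0:ZMod 2) else 1) + β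
        = (if (((i:ℕ):ℤ)+C)%4 = 0 then (0:ZMod 2) else 1) + γ) then (1:ℤ) else -1)
    = if (A - C) % 4 = 0 then (if β = γ then 4 else -4) else 0 := by
  have hA : ∀ i : ℤ, (i + A) % 4 = (i + A % 4) % 4 := fun i => by omega
  have hC : ∀ i : ℤ, (i + C) % 4 = (i + C % 4) % 4 := fun i => by omega
  have hAC : (A - C) % 4 = (A % 4 - C % 4) % 4 := by omega
  rw [hAC]
  simp only [hA, hC]
  have ha0 : (0:ℤ) ≤ A % 4 := Int.emod_nonneg _ (by norm_num)
  have ha4 : A % 4 < 4 := Int.emod_lt_of_pos _ (by norm_num)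
  have hc0 : (0:ℤ) ≤ C % 4 := Int.emod_nonneg _ (by norm_num)
  have hc4 : C % 4 < 4 := Int.emod_lt_of_pos _ (by norm_num)
  set a := A % 4 with hadef
  set c := C % 4 with hcdef
  clear_value a c
  clear hA hC hAC hadef hcdef
  revert β γ
  interval_cases a <;> interval_cases c <;> decide

private lemma yg_cond (δ τj u jj jj' : ℤ) (hδ : δ = 1 ∨ δ = -1) (aj aj' : ℤ)
    (haj : aj = 0 ∨ aj = 1) (haj' : aj' = 0 ∨ aj' = 1) (v : ℤ)
    (hjj' : jj' = jj + τj - v) (hdvd : (4:ℤ) ∣ (v + u)) :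
    ((δ*aj - jj)%4 - (u + (δ*aj' - jj')%4)) % 4 = 0 ↔ (τj + δ*(aj - aj'))%4 = 0 := by
  rcases hδ with h|h <;> rcases haj with h1|h1 <;> rcases haj' with h2|h2 <;>
    subst h h1 h2 <;> omega




section Tr
variable (F : Type) [Field F] [Fintype F] [Algebra (ZMod 2) F] [CharP F 2]

private lemma yg_trace_sq (z : F) :
    Algebra.trace (ZMod 2) F (z^2) = Algebra.trace (ZMod 2) F z := by
  let e : F ≃ₐ[ZMod 2] F := by
    refine AlgEquiv.ofRingEquiv (f := frobeniusEquiv F 2) ?_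
    intro x
    simp only [frobeniusEquiv_apply, frobenius_def]
    rw [← map_pow]
    congr 1
    revert x; decide
  have h := Algebra.trace_eq_of_algEquiv e z
  have he : e z = z ^ 2 := rfl
  rw [he] at h
  exact h

private lemma yg_trace_pow (n : ℕ) (z : F) :
    Algebra.trace (ZMod 2) F (z^(2^n)) = Algebra.trace (ZMod 2) F z := by
  induction n with
  | zero => simp
  | succ n ih =>
    have : z ^ (2^(n+1)) = (z^(2^n))^2 := by rw [← pow_mul, pow_succ]
    rw [this, yg_trace_sq, ih]

private lemma yg_nondeg {c : F} (hc : c ≠ 0) :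
    ∃ x₀ : F, Algebra.trace (ZMod 2) F (x₀ * c) ≠ 0 := by
  have : FiniteDimensional (ZMod 2) F := Module.Finite.of_finite
  have htr := (traceForm_nondegenerate (ZMod 2) F).1 c
  simp_rw [Algebra.traceForm_apply] at htr
  by_contra! hf
  refine hc (htr fun n => ?_)
  rw [mul_comm]; exact hf n

private lemma yg_shift (A : Finset F) (f : F → ZMod 2)
    (x₀ : F) (hcl : ∀ x ∈ A, x + x₀ ∈ A) (hf : ∀ x, f (x + x₀) = f x + 1) :
    ∑ x ∈ A, ygeps (f x) = 0 := by
  have hself : ∀ x : F, x + x₀ + x₀ = x := by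
    intro x; rw [add_assoc, CharTwo.add_self_eq_zero, add_zero]
  have h1 : ∑ x ∈ A, ygeps (f (x + x₀)) = ∑ x ∈ A, ygeps (f x) := by
    refine Finset.sum_equiv (Equiv.addRight x₀) ?_ ?_
    · intro x
      constructor
      · intro hx; exact hcl x hx
      · intro hx
        have := hcl _ hx
        rwa [Equiv.coe_addRight, hself] at this
    · intro x _; rfl
  have h2 : ∑ x ∈ A, ygeps (f (x + x₀)) = ∑ x ∈ A, - ygeps (f x) := by
    refine Finset.sum_congr rfl fun x _ => ?_
    rw [hf x, ygeps_add_one]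
  have h3 := h1.symm.trans h2
  rw [Finset.sum_neg_distrib] at h3
  omega

private lemma yg_sum_univ {c : F} (hc : c ≠ 0) :
    ∑ x : F, ygeps (Algebra.trace (ZMod 2) F (x * c)) = 0 := by
  obtain ⟨x₀, hx₀⟩ := yg_nondeg F hc
  have h1 : Algebra.trace (ZMod 2) F (x₀ * c) = 1 := by
    generalize Algebra.trace (ZMod 2) F (x₀ * c) = z at hx₀ ⊢
    revert hx₀; revert z; decide
  refine yg_shift F Finset.univ (fun x => Algebra.trace (ZMod 2) F (x * c)) x₀
    (fun x _ => Finset.mem_univ _) fun x => ?_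
  show Algebra.trace (ZMod 2) F ((x + x₀) * c) = _
  rw [add_mul, map_add, h1]

private lemma yg_pow_card (k : ℕ) (hF : Fintype.card F = 2 ^ (2*k)) (z : F) :
    z ^ (2^k * 2^k) = z := by
  have h : (2:ℕ)^k * 2^k = 2^(2*k) := by rw [← pow_add, two_mul]
  rw [h, ← hF, FiniteField.pow_card]

private lemma yg_exists_K (k : ℕ) (hF : Fintype.card F = 2 ^ (2*k)) {c : F}
    (hd : c + c^(2^k) ≠ 0) :
    ∃ x₀ : F, x₀^(2^k) = x₀ ∧ Algebra.trace (ZMod 2) F (x₀ * c) ≠ 0 := by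
  by_contra h
  push_neg at h
  have key1 : ∀ y : F, Algebra.trace (ZMod 2) F (y * c)
      = Algebra.trace (ZMod 2) F (y * c^(2^k)) := by
    intro y
    have hmem : (y + y^(2^k))^(2^k) = y + y^(2^k) := by
      rw [add_pow_char_pow, ← pow_mul, yg_pow_card F k hF, add_comm]
    have h0 := h _ hmem
    rw [add_mul, map_add] at h0
    have h2 : Algebra.trace (ZMod 2) F (y ^ 2 ^ k * c)
        = Algebra.trace (ZMod 2) F (y * c ^ 2 ^ k) := by
      conv_rhs => rw [← yg_trace_pow F k (y * c ^ 2 ^ k)]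
      congr 1
      rw [mul_pow, ← pow_mul, yg_pow_card F k hF]
    rw [h2] at h0
    generalize Algebra.trace (ZMod 2) F (y * c) = z1 at h0 ⊢
    generalize Algebra.trace (ZMod 2) F (y * c ^ 2 ^ k) = z2 at h0 ⊢
    revert h0; revert z1 z2; decide
  have key2 : ∀ y : F, Algebra.trace (ZMod 2) F (y * (c + c^(2^k))) = 0 := by
    intro y
    rw [mul_add, map_add, key1 y]
    generalize Algebra.trace (ZMod 2) F (y * c ^ 2 ^ k) = z
    revert z; decide
  obtain ⟨x₀, hx₀⟩ := yg_nondeg F hd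
  exact hx₀ (key2 x₀)

private lemma yg_sum_K [DecidableEq F] (k : ℕ) (hF : Fintype.card F = 2 ^ (2*k)) {c : F}
    (hd : c + c^(2^k) ≠ 0) :
    ∑ x ∈ Finset.univ.filter (fun x : F => x^(2^k) = x),
      ygeps (Algebra.trace (ZMod 2) F (x * c)) = 0 := by
  obtain ⟨x₀, hx₀K, hx₀⟩ := yg_exists_K F k hF hd
  have h1 : Algebra.trace (ZMod 2) F (x₀ * c) = 1 := by
    generalize Algebra.trace (ZMod 2) F (x₀ * c) = z at hx₀ ⊢
    revert hx₀; revert z; decide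
  refine yg_shift F _ (fun x => Algebra.trace (ZMod 2) F (x * c)) x₀ ?_ fun x => ?_
  · intro x hx
    simp only [Finset.mem_filter, Finset.mem_univ, true_and] at hx ⊢
    rw [add_pow_char_pow, hx, hx₀K]
  · show Algebra.trace (ZMod 2) F ((x + x₀) * c) = _
    rw [add_mul, map_add, h1]

end Tr



private lemma yg_QP (k : ℕ) (hk : 1 ≤ k) : (2^k+1) * (2^k-1) = 2^(2*k) - 1 := by
  have h1 : 1 ≤ 2^k := Nat.one_le_two_pow
  have h2 : 2^(2*k) = 2^k * 2^k := by rw [two_mul, pow_add]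
  obtain ⟨m, hm⟩ : ∃ m, 2^k = m + 1 := ⟨2^k - 1, by omega⟩
  rw [h2, hm, Nat.add_sub_cancel]
  have e1 : (m+1)*(m+1) = m*m + 2*m + 1 := by ring
  have e2 : (m+1+1)*m = m*m+2*m := by ring
  rw [e1, e2]
  omega

private lemma yg_pk4 (k : ℕ) (hk : 1 < k) : 4 ≤ 2^k := by
  calc 4 = 2^2 := by norm_num
  _ ≤ 2^k := Nat.pow_le_pow_right (by norm_num) hk

private lemma yg_W16 (k : ℕ) (hk : 1 < k) : 16 ≤ 2^(2*k) := by
  calc (16:ℕ) = 2^4 := by norm_num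
  _ ≤ 2^(2*k) := Nat.pow_le_pow_right (by norm_num) (by omega)

section Geo
variable (F : Type) [Field F] [Fintype F] [DecidableEq F]

private lemma yg_alpha_ne (k : ℕ) (hk : 1 < k) (α : F) (hα : orderOf α = 2 ^ (2*k) - 1) :
    α ≠ 0 := by
  intro h0
  have hW := yg_W16 k hk
  have h1 : α ^ (2^(2*k)-1) = 1 := by rw [← hα]; exact pow_orderOf_eq_one α
  rw [h0, zero_pow (by omega)] at h1
  exact zero_ne_one h1

private lemma yg_image_univ (k : ℕ) (hk : 1 < k) (hF : Fintype.card F = 2 ^ (2*k))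
    (α : F) (hα : orderOf α = 2 ^ (2*k) - 1) :
    (range (2^(2*k)-1)).image (α ^ ·) = Finset.univ.erase 0 := by
  have hW := yg_W16 k hk
  refine Finset.eq_of_subset_of_card_le ?_ ?_
  · intro x hx
    simp only [Finset.mem_image, Finset.mem_range] at hx
    obtain ⟨j, hj, rfl⟩ := hx
    exact Finset.mem_erase.2 ⟨pow_ne_zero _ (yg_alpha_ne F k hk α hα), Finset.mem_univ _⟩
  · rw [Finset.card_erase_of_mem (Finset.mem_univ _), Finset.card_univ, hF]
    rw [Finset.card_image_of_injOn, Finset.card_range]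
    intro a ha b hb hab
    simp only [Finset.coe_range, Set.mem_Iio] at ha hb
    exact pow_injOn_Iio_orderOf (by rw [hα]; exact ha) (by rw [hα]; exact hb) hab

private lemma yg_S_full [Algebra (ZMod 2) F] [CharP F 2]
    (k : ℕ) (hk : 1 < k) (hF : Fintype.card F = 2 ^ (2*k))
    (α : F) (hα : orderOf α = 2 ^ (2*k) - 1) {c : F} (hc : c ≠ 0) :
    ∑ j ∈ range (2^(2*k)-1), ygeps (Algebra.trace (ZMod 2) F (α^j * c)) = -1 := by
  rw [show (∑ j ∈ range (2^(2*k)-1), ygeps (Algebra.trace (ZMod 2) F (α^j * c)))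
      = ∑ x ∈ (range (2^(2*k)-1)).image (α ^ ·), ygeps (Algebra.trace (ZMod 2) F (x * c)) by
    rw [Finset.sum_image]
    intro a ha b hb hab
    simp only [Finset.mem_coe, Finset.mem_range] at ha hb
    exact pow_injOn_Iio_orderOf (by rw [hα]; exact ha) (by rw [hα]; exact hb) hab]
  rw [yg_image_univ F k hk hF α hα]
  have h := Finset.sum_erase_eq_sub (f := fun x : F => ygeps (Algebra.trace (ZMod 2) F (x * c)))
    (Finset.mem_univ (0:F))
  rw [h, yg_sum_univ F hc]
  norm_num [ygeps]

private lemma yg_order_beta (k : ℕ) (hk : 1 < k)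
    (α : F) (hα : orderOf α = 2 ^ (2*k) - 1) : orderOf (α^(2^k+1)) = 2^k - 1 := by
  rw [orderOf_pow' α (by positivity), hα, ← yg_QP k (by omega)]
  rw [Nat.gcd_comm, Nat.gcd_eq_left ⟨2^k-1, rfl⟩, Nat.mul_div_cancel_left _ (by positivity)]

private lemma yg_image_K (k : ℕ) (hk : 1 < k)
    (α : F) (hα : orderOf α = 2 ^ (2*k) - 1) :
    (range (2^k-1)).image ((α^(2^k+1)) ^ ·)
      = (Finset.univ.filter (fun x : F => x^(2^k) = x)).erase 0 := by
  have h4 := yg_pk4 k hk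
  have hβ := yg_order_beta F k hk α hα
  have hβP : (α^(2^k+1)) ^ (2^k-1) = 1 := by rw [← hβ]; exact pow_orderOf_eq_one _
  have hinj : Set.InjOn ((α^(2^k+1)) ^ ·) (Finset.range (2^k-1) : Set ℕ) := by
    intro a ha b hb hab
    simp only [Finset.coe_range, Set.mem_Iio] at ha hb
    exact pow_injOn_Iio_orderOf (by rw [hβ]; exact ha) (by rw [hβ]; exact hb) hab
  refine Finset.eq_of_subset_of_card_le ?_ ?_
  · intro x hx
    simp only [Finset.mem_image, Finset.mem_range] at hx
    obtain ⟨m, hm, rfl⟩ := hx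
    refine Finset.mem_erase.2 ⟨pow_ne_zero _ (pow_ne_zero _ (yg_alpha_ne F k hk α hα)), ?_⟩
    simp only [Finset.mem_filter, Finset.mem_univ, true_and]
    have hP : ((α^(2^k+1)) ^ m) ^ (2^k - 1) = 1 := by
      rw [← pow_mul, mul_comm m, pow_mul, hβP, one_pow]
    calc ((α^(2^k+1))^m) ^ 2^k = ((α^(2^k+1))^m) ^ (2^k - 1) * ((α^(2^k+1))^m) := by
          rw [← pow_succ]; congr 1; omega
    _ = (α^(2^k+1))^m := by rw [hP, one_mul]
  · have hcard1 : ((range (2^k-1)).image ((α^(2^k+1)) ^ ·)).card = 2^k - 1 := by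
      rw [Finset.card_image_of_injOn hinj, Finset.card_range]
    rw [hcard1]
    have hsub : (Finset.univ.filter (fun x : F => x^(2^k) = x)).erase 0
        ⊆ (Polynomial.nthRoots (2^k-1) (1:F)).toFinset := by
      intro x hx
      obtain ⟨hx0, hxm⟩ := Finset.mem_erase.1 hx
      simp only [Finset.mem_filter, Finset.mem_univ, true_and] at hxm
      rw [Multiset.mem_toFinset, Polynomial.mem_nthRoots (by omega)]
      have hstep : x ^ (2^k - 1) * x = x := by
        rw [← pow_succ, show 2^k - 1 + 1 = 2^k by omega]
        exact hxm
      exact mul_right_cancel₀ hx0 (by rw [hstep, one_mul])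
    calc ((Finset.univ.filter (fun x : F => x^(2^k) = x)).erase 0).card
        ≤ (Polynomial.nthRoots (2^k-1) (1:F)).toFinset.card := Finset.card_le_card hsub
    _ ≤ Multiset.card (Polynomial.nthRoots (2^k-1) (1:F)) := Multiset.toFinset_card_le _
    _ ≤ 2^k - 1 := Polynomial.card_nthRoots _ _

private lemma yg_S_K [Algebra (ZMod 2) F] [CharP F 2]
    (k : ℕ) (hk : 1 < k) (hF : Fintype.card F = 2 ^ (2*k))
    (α : F) (hα : orderOf α = 2 ^ (2*k) - 1) {c : F}
    (hd : c + c^(2^k) ≠ 0) :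
    ∑ m ∈ range (2^k-1), ygeps (Algebra.trace (ZMod 2) F ((α^(2^k+1))^m * c)) = -1 := by
  have hβ := yg_order_beta F k hk α hα
  rw [show (∑ m ∈ range (2^k-1), ygeps (Algebra.trace (ZMod 2) F ((α^(2^k+1))^m * c)))
      = ∑ x ∈ (range (2^k-1)).image ((α^(2^k+1)) ^ ·),
          ygeps (Algebra.trace (ZMod 2) F (x * c)) by
    rw [Finset.sum_image]
    intro a ha b hb hab
    simp only [Finset.mem_coe, Finset.mem_range] at ha hb
    exact pow_injOn_Iio_orderOf (by rw [hβ]; exact ha) (by rw [hβ]; exact hb) hab]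
  rw [yg_image_K F k hk α hα]
  have h0mem : (0:F) ∈ Finset.univ.filter (fun x : F => x^(2^k) = x) := by
    simp only [Finset.mem_filter, Finset.mem_univ, true_and]
    exact zero_pow (by positivity)
  have h := Finset.sum_erase_eq_sub (f := fun x : F => ygeps (Algebra.trace (ZMod 2) F (x * c)))
    h0mem
  rw [h, yg_sum_K F k hF hd]
  norm_num [ygeps]

end Geo



private lemma yg_pk4' (k : ℕ) (hk : 1 < k) : 4 ≤ 2^k := by
  calc 4 = 2^2 := by norm_num
  _ ≤ 2^k := Nat.pow_le_pow_right (by norm_num) hk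

private lemma yg_filter_dvd (Q P : ℕ) (hQ : 0 < Q) :
    (range (Q*P)).filter (fun j => Q ∣ j) = (range P).image (fun m => Q*m) := by
  ext j
  simp only [mem_filter, mem_range, mem_image]
  constructor
  · rintro ⟨hj, m, rfl⟩
    exact ⟨m, (Nat.mul_lt_mul_left hQ).1 hj, rfl⟩
  · rintro ⟨m, hm, rfl⟩
    exact ⟨(Nat.mul_lt_mul_left hQ).2 hm, ⟨m, rfl⟩⟩

private lemma yg_filter_dvd_shift (Q P τ c₀ : ℕ) (hQ : 0 < Q) (hc₀ : c₀ < Q)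
    (hdc : Q ∣ (c₀ + τ)) :
    (range (Q*P)).filter (fun j => Q ∣ (j+τ)) = (range P).image (fun m => Q*m + c₀) := by
  ext j
  simp only [mem_filter, mem_range, mem_image]
  constructor
  · rintro ⟨hj, hd⟩
    have e1 : (j+τ) % Q = 0 := Nat.dvd_iff_mod_eq_zero.1 hd
    have e2 : (c₀+τ) % Q = 0 := Nat.dvd_iff_mod_eq_zero.1 hdc
    have e3 : j ≡ c₀ [MOD Q] := Nat.ModEq.add_right_cancel' τ (by
      show (j+τ) % Q = (c₀+τ) % Q
      omega)
    have h1 : j % Q = c₀ := by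
      have h0 : j % Q = c₀ % Q := e3
      rwa [Nat.mod_eq_of_lt hc₀] at h0
    refine ⟨j / Q, Nat.div_lt_of_lt_mul hj, ?_⟩
    rw [← h1]
    exact Nat.div_add_mod j Q
  · rintro ⟨m, hm, rfl⟩
    constructor
    · have h1 : Q*(m+1) ≤ Q*P := Nat.mul_le_mul_left Q hm
      have h2 : Q*(m+1) = Q*m + Q := by ring
      omega
    · have : Q*m + c₀ + τ = Q*m + (c₀ + τ) := by ring
      rw [this]
      exact dvd_add ⟨m, rfl⟩ hdc

private lemma yg_e_formula (k : ℕ) (hk : 1 < k) (δ : ℤ) (e : ℕ → ℤ)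
    (he : ∀ i r : ℕ, i ≤ 2 ^ k - 2 → r ≤ 2 ^ k →
      e ((2 ^ k + 1) * i + r) =
        if r = 0 then (3 * (i : ℤ) + δ) % 4 else (3 * ((i : ℤ) + (r : ℤ))) % 4)
    (j : ℕ) (hj : j < 2^(2*k) - 1) :
    e j = (δ * (if (2^k+1) ∣ j then 1 else 0) - (j:ℤ)) % 4 := by
  have h4 := yg_pk4' k hk
  have hQP : (2^k+1) * (2^k-1) = 2^(2*k)-1 := by
    have h1 : 1 ≤ 2^k := Nat.one_le_two_pow
    have h2 : 2^(2*k) = 2^k * 2^k := by rw [two_mul, pow_add]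
    obtain ⟨m, hm⟩ : ∃ m, 2^k = m + 1 := ⟨2^k - 1, by omega⟩
    rw [h2, hm, Nat.add_sub_cancel]
    have e1 : (m+1)*(m+1) = m*m + 2*m + 1 := by ring
    have e2 : (m+1+1)*m = m*m+2*m := by ring
    rw [e1, e2]
    omega
  have hQ0 : 0 < 2^k+1 := by positivity
  have hp : j / (2^k+1) ≤ 2^k - 2 := by
    have h1 : j < (2^k+1) * (2^k-1) := by rw [hQP]; exact hj
    have h2 : j / (2^k+1) < 2^k - 1 := Nat.div_lt_of_lt_mul h1
    omega
  have hr : j % (2^k+1) ≤ 2^k := by have := Nat.mod_lt j hQ0; omega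
  have hje : (2^k+1) * (j / (2^k+1)) + j % (2^k+1) = j := Nat.div_add_mod j (2^k+1)
  have h := he (j/(2^k+1)) (j%(2^k+1)) hp hr
  rw [hje] at h
  rw [h]
  have hdvd : (2^k+1) ∣ j ↔ j % (2^k+1) = 0 := Nat.dvd_iff_mod_eq_zero
  obtain ⟨m, hm⟩ : ∃ m : ℤ, (2:ℤ)^k = 4*m :=
    ⟨2^(k-2), by rw [show (4:ℤ) = 2^2 by norm_num, ← pow_add, show 2+(k-2) = k by omega]⟩
  have hjz : (j:ℤ) = ((2:ℤ)^k+1) * (j/(2^k+1) : ℕ) + (j%(2^k+1) : ℕ) := by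
    have hcast := congrArg (fun n : ℕ => (n:ℤ)) hje
    push_cast at hcast ⊢
    linarith [hcast]
  set p := j / (2^k+1) with hpdef
  set r := j % (2^k+1) with hrdef
  split_ifs with h1 h2 h3
  · -- r = 0, dvd
    have key : (3*(p:ℤ)+δ) - (δ*1 - (j:ℤ)) = 4*(m*(p:ℤ)+(p:ℤ)) := by
      rw [hjz, hm, h1]; push_cast; ring
    generalize m*(p:ℤ)+(p:ℤ) = w at key
    omega
  · exact absurd (hdvd.2 h1) h2
  · exact absurd (hdvd.1 h3) h1
  · have key : (3*((p:ℤ)+(r:ℤ))) - (δ*0 - (j:ℤ)) = 4*(m*(p:ℤ)+(p:ℤ)+(r:ℤ)) := by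
      rw [hjz, hm]; ring
    generalize m*(p:ℤ)+(p:ℤ)+(r:ℤ) = w at key
    omega

private lemma yg_mod_N (W i j τ : ℕ) (hW : 0 < W) (hi : i < 4) (hj : j < W) :
    (i*W + j + τ) % (4*W) = ((i+(j+τ)/W)%4)*W + (j+τ)%W := by
  set u := (j+τ)/W with hudef
  have hdm : W*u + (j+τ)%W = j + τ := Nat.div_add_mod _ _
  have hj' : (j+τ)%W < W := Nat.mod_lt _ hW
  have h1 : i*W + j + τ = (i+u)*W + (j+τ)%W := by
    have : (i+u)*W = i*W + W*u := by ring
    omega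
  rw [h1]
  set a := i + u with hadef
  have h2 : a = 4*(a/4) + a%4 := (Nat.div_add_mod _ _).symm
  have h3 : a*W + (j+τ)%W = ((a%4)*W + (j+τ)%W) + (a/4)*(4*W) := by
    conv_lhs => rw [h2]
    ring
  rw [h3, Nat.add_mul_mod_self_right]
  refine Nat.mod_eq_of_lt ?_
  have h5 : a % 4 < 4 := Nat.mod_lt _ (by norm_num)
  have h6 : (a%4)*W ≤ 3*W := Nat.mul_le_mul_right W (by omega)
  omega

private lemma yg_master
    (k : ℕ) (hk : 1 < k)
    (δ : ℤ) (hδ : δ = 1 ∨ δ = -1)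
    (W N : ℕ) (hW : W = 2 ^ (2 * k) - 1) (hN : N = 4 * W)
    (F : Type) [Field F] [Fintype F] [Algebra (ZMod 2) F]
    (hF : Fintype.card F = 2 ^ (2 * k))
    (α : F) (hα : orderOf α = 2 ^ (2 * k) - 1)
    (b : ℕ → ZMod 2) (hb : ∀ j, b j = Algebra.trace (ZMod 2) F (α ^ j))
    (e : ℕ → ℤ)
    (he : ∀ i r : ℕ, i ≤ 2 ^ k - 2 → r ≤ 2 ^ k →
      e ((2 ^ k + 1) * i + r) =
        if r = 0 then (3 * (i : ℤ) + δ) % 4 else (3 * ((i : ℤ) + (r : ℤ))) % 4)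
    (s : ℕ → ZMod 2)
    (hs : ∀ i j : ℕ, i ≤ 3 → j ≤ W - 1 →
      s (i * W + j) = (if ((i : ℤ) + e j) % 4 = 0 then 0 else 1) + b j)
    (AC : ℕ → ℤ)
    (hAC : ∀ τ, AC τ = ∑ t ∈ Finset.range N, if s t = s ((t + τ) % N) then (1 : ℤ) else -1)
    (τ : ℕ) (hτ1 : 1 ≤ τ) (hτ2 : τ ≤ N - 1) :
    AC τ = if τ % 4 = 2 then 0
      else if τ % 4 = 0 then (if (2^k+1) ∣ τ then -4 else 4)
      else (if (2^k+1) ∣ τ then 0 else -4) := by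
  classical
  haveI : CharP F 2 := charP_of_injective_algebraMap (algebraMap (ZMod 2) F).injective 2
  have h4 := yg_pk4 k hk
  have h16 := yg_W16 k hk
  have hQP : (2^k+1) * (2^k-1) = W := by
    rw [hW]
    exact yg_QP k (by omega)
  have hW0 : 0 < W := by omega
  have hαW : orderOf α = W := by rw [hα, hW]
  have hαW1 : α ^ W = 1 := by rw [← hαW]; exact pow_orderOf_eq_one α
  have hαne := yg_alpha_ne F k hk α hα
  have hτN : τ < 4*W := by omega
  set g : F := 1 + α ^ τ with hgdef
  set f : ℕ → ℤ := fun j => ygeps (Algebra.trace (ZMod 2) F (α^j * g)) with hfdef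
  have hQdvd4 : (4:ℕ) ∣ W + 1 := by
    refine ⟨2^(2*k-2), ?_⟩
    rw [show W + 1 = 2^(2*k) by omega, show (4:ℕ) = 2^2 by norm_num, ← pow_add]
    congr 1
    omega
  rw [hAC τ, hN, yg_sum_decomp, Finset.sum_comm]
  have hstep : ∀ j ∈ range W,
      (∑ i ∈ range 4, (if s (i*W+j) = s ((i*W+j+τ) % (4*W)) then (1:ℤ) else -1))
      = 4 * (if ((τ:ℤ) + δ*((if (2^k+1) ∣ j then (1:ℤ) else 0)
            - (if (2^k+1) ∣ (j+τ) then (1:ℤ) else 0)))%4 = 0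
          then f j else 0) := by
    intro j hjr
    rw [mem_range] at hjr
    have hj'W : (j+τ)%W < W := Nat.mod_lt _ hW0
    have hterm : ∀ i ∈ range 4,
        (if s (i*W+j) = s ((i*W+j+τ)%(4*W)) then (1:ℤ) else -1)
        = (if ((if (((i:ℕ):ℤ) + e j)%4 = 0 then (0:ZMod 2) else 1) + b j
            = (if (((i:ℕ):ℤ) + ((((j+τ)/W : ℕ):ℤ) + e ((j+τ)%W)))%4 = 0 then (0:ZMod 2) else 1)
              + b ((j+τ)%W)) then (1:ℤ) else -1) := by
      intro i hir
      rw [mem_range] at hir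
      rw [yg_mod_N W i j τ hW0 hir hjr]
      rw [hs i j (by omega) (by omega), hs ((i+(j+τ)/W)%4) ((j+τ)%W) (by omega) (by omega)]
      have hcast : ((((i+(j+τ)/W)%4 : ℕ):ℤ) + e ((j+τ)%W)) % 4
          = (((i:ℕ):ℤ) + ((((j+τ)/W : ℕ):ℤ) + e ((j+τ)%W))) % 4 := by
        push_cast
        omega
      rw [hcast]
    rw [Finset.sum_congr rfl hterm]
    rw [yg_inner (e j) ((((j+τ)/W : ℕ):ℤ) + e ((j+τ)%W)) (b j) (b ((j+τ)%W))]
    have hej := yg_e_formula k hk δ e he j (by omega)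
    have hej' := yg_e_formula k hk δ e he ((j+τ)%W) (by omega)
    have hQWdvd : (2^k+1) ∣ W := ⟨2^k-1, hQP.symm⟩
    have hdm0 : W * ((j+τ)/W) + (j+τ)%W = j+τ := Nat.div_add_mod _ _
    have hdvd' : (2^k+1) ∣ ((j+τ)%W) ↔ (2^k+1) ∣ (j+τ) := by
      constructor
      · intro hdd
        rw [← hdm0]
        exact dvd_add (Dvd.dvd.mul_right hQWdvd _) hdd
      · intro hdd
        have h5 := Nat.dvd_sub hdd (Dvd.dvd.mul_right hQWdvd ((j+τ)/W))
        rwa [show j+τ - W*((j+τ)/W) = (j+τ)%W by omega] at h5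
    have hiff : ((e j - ((((j+τ)/W : ℕ):ℤ) + e ((j+τ)%W))) % 4 = 0)
        ↔ (((τ:ℤ) + δ*((if (2^k+1) ∣ j then (1:ℤ) else 0)
            - (if (2^k+1) ∣ (j+τ) then (1:ℤ) else 0)))%4 = 0) := by
      rw [hej, hej']
      rw [show (if (2^k+1) ∣ ((j+τ)%W) then (1:ℤ) else 0)
          = (if (2^k+1) ∣ (j+τ) then (1:ℤ) else 0) by
        by_cases hc : (2^k+1) ∣ (j+τ)
        · rw [if_pos (hdvd'.2 hc), if_pos hc]
        · rw [if_neg (fun hcc => hc (hdvd'.1 hcc)), if_neg hc]]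
      refine yg_cond δ (τ:ℤ) ((((j+τ)/W : ℕ):ℤ)) (j:ℤ) (((j+τ)%W : ℕ):ℤ) hδ _ _
        (by split_ifs <;> norm_num) (by split_ifs <;> norm_num)
        ((((j+τ)/W : ℕ):ℤ) * (W:ℤ)) ?_ ?_
      · have hcast := congrArg (fun n : ℕ => (n:ℤ)) hdm0
        push_cast at hcast ⊢
        linarith [hcast]
      · obtain ⟨m, hm⟩ := hQdvd4
        have hWm : (W:ℤ) + 1 = 4*(m:ℤ) := by exact_mod_cast congrArg (fun n : ℕ => (n:ℤ)) hm
        refine ⟨(((j+τ)/W : ℕ):ℤ) * m, ?_⟩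
        have h1 : (((j+τ)/W : ℕ):ℤ) * (W:ℤ) + (((j+τ)/W : ℕ):ℤ)
            = (((j+τ)/W : ℕ):ℤ) * ((W:ℤ)+1) := by ring
        rw [h1, hWm]
        ring
    have hval : (if b j = b ((j+τ)%W) then (4:ℤ) else -4) = 4 * f j := by
      have hbj' : b ((j+τ)%W) = Algebra.trace (ZMod 2) F (α ^ (j+τ)) := by
        rw [hb]
        congr 1
        rw [← hαW]
        exact pow_mod_orderOf α (j+τ)
      have hTg : Algebra.trace (ZMod 2) F (α^j * g) = b j + b ((j+τ)%W) := by
        rw [hb j, hbj', hgdef, mul_add, mul_one, ← pow_add, ← map_add]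
      rw [ygeps_if (b j) (b ((j+τ)%W)), hfdef]
      simp only
      rw [hTg]
    rw [hval]
    by_cases hcc : (e j - ((((j+τ)/W : ℕ):ℤ) + e ((j+τ)%W))) % 4 = 0
    · rw [if_pos hcc, if_pos (hiff.1 hcc)]
    · rw [if_neg hcc, if_neg (fun hx => hcc (hiff.2 hx))]
      ring
  rw [Finset.sum_congr rfl hstep, ← Finset.mul_sum]
  -- scenario analysis
  have hgne : ¬ W ∣ τ → g ≠ 0 := by
    intro hnd hg0
    have h1 : α ^ τ = -1 := eq_neg_of_add_eq_zero_right hg0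
    rw [CharTwo.neg_eq] at h1
    exact hnd (hαW ▸ orderOf_dvd_of_pow_eq_one h1)
  have hSfull : g ≠ 0 → ∑ j ∈ range W, f j = -1 := by
    intro hg
    have h1 := yg_S_full F k hk hF α hα (c := g) hg
    rw [hW]
    exact h1
  by_cases hQτ : (2^k+1) ∣ τ
  · -- Q ∣ τ
    have hd1iff2 : ∀ j : ℕ, (2^k+1) ∣ j ↔ (2^k+1) ∣ (j+τ) := by
      intro j
      constructor
      · intro h; exact dvd_add h hQτ
      · intro h
        have h5 := Nat.dvd_sub h hQτ
        rwa [show j+τ-τ = j by omega] at h5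
    rcases (by omega : τ % 4 = 0 ∨ τ % 4 = 1 ∨ τ % 4 = 2 ∨ τ % 4 = 3) with hm4|hm4|hm4|hm4
    · -- τ ≡ 0 mod 4, Q∣τ : AC = -4
      have hτZ : (τ:ℤ) % 4 = 0 := by omega
      have hWnd : ¬ W ∣ τ := by
        rintro ⟨m, rfl⟩
        have hm0 : 1 ≤ m := by
          rcases Nat.eq_zero_or_pos m with rfl|h
          · omega
          · exact h
        have hm3 : m ≤ 3 := by
          by_contra hcon
          push_neg at hcon
          have := Nat.mul_le_mul_left W (show 4 ≤ m by omega)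
          omega
        have hW4 : W % 4 = 3 := by omega
        interval_cases m <;> omega
      have hpt : ∀ j ∈ range W, (if ((τ:ℤ) + δ*((if (2^k+1) ∣ j then (1:ℤ) else 0)
            - (if (2^k+1) ∣ (j+τ) then (1:ℤ) else 0)))%4 = 0 then f j else 0) = f j := by
        intro j _
        by_cases d1 : (2^k+1) ∣ j
        · rw [if_pos d1, if_pos ((hd1iff2 j).1 d1), if_pos (by omega)]
        · rw [if_neg d1, if_neg (fun h => d1 ((hd1iff2 j).2 h)), if_pos (by omega)]
      rw [Finset.sum_congr rfl hpt, hSfull (hgne hWnd)]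
      rw [if_neg (by omega), if_pos hm4, if_pos hQτ]
      norm_num
    · -- τ ≡ 1, Q∣τ : AC = 0
      have hτZ : (τ:ℤ) % 4 = 1 := by omega
      have hpt : ∀ j ∈ range W, (if ((τ:ℤ) + δ*((if (2^k+1) ∣ j then (1:ℤ) else 0)
            - (if (2^k+1) ∣ (j+τ) then (1:ℤ) else 0)))%4 = 0 then f j else 0) = 0 := by
        intro j _
        by_cases d1 : (2^k+1) ∣ j
        · rw [if_pos d1, if_pos ((hd1iff2 j).1 d1), if_neg (by omega)]
        · rw [if_neg d1, if_neg (fun h => d1 ((hd1iff2 j).2 h)), if_neg (by omega)]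
      rw [Finset.sum_congr rfl hpt]
      rw [if_neg (by omega), if_neg (by omega), if_pos hQτ]
      simp
    · -- τ ≡ 2 : AC = 0
      have hτZ : (τ:ℤ) % 4 = 2 := by omega
      have hpt : ∀ j ∈ range W, (if ((τ:ℤ) + δ*((if (2^k+1) ∣ j then (1:ℤ) else 0)
            - (if (2^k+1) ∣ (j+τ) then (1:ℤ) else 0)))%4 = 0 then f j else 0) = 0 := by
        intro j _
        rw [if_neg]
        rcases hδ with rfl|rfl <;> by_cases d1 : (2^k+1) ∣ j <;>
          by_cases d2 : (2^k+1) ∣ (j+τ) <;> simp only [d1, d2, if_true, if_false] <;> omega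
      rw [Finset.sum_congr rfl hpt]
      rw [if_pos hm4]
      simp
    · -- τ ≡ 3, Q∣τ : AC = 0
      have hτZ : (τ:ℤ) % 4 = 3 := by omega
      have hpt : ∀ j ∈ range W, (if ((τ:ℤ) + δ*((if (2^k+1) ∣ j then (1:ℤ) else 0)
            - (if (2^k+1) ∣ (j+τ) then (1:ℤ) else 0)))%4 = 0 then f j else 0) = 0 := by
        intro j _
        by_cases d1 : (2^k+1) ∣ j
        · rw [if_pos d1, if_pos ((hd1iff2 j).1 d1), if_neg (by omega)]
        · rw [if_neg d1, if_neg (fun h => d1 ((hd1iff2 j).2 h)), if_neg (by omega)]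
      rw [Finset.sum_congr rfl hpt]
      rw [if_neg (by omega), if_neg (by omega), if_pos hQτ]
      simp
  · -- ¬ Q ∣ τ
    have hQWdvd' : (2^k+1) ∣ W := ⟨2^k-1, hQP.symm⟩
    have hWnd : ¬ W ∣ τ := fun h => hQτ (dvd_trans hQWdvd' h)
    have hg := hgne hWnd
    have hτQmod : τ % (2^k+1) ≠ 0 := fun h => hQτ (Nat.dvd_iff_mod_eq_zero.2 h)
    have hτQlt : τ % (2^k+1) < 2^k+1 := Nat.mod_lt _ (by positivity)
    set c₀ := (2^k+1) - τ % (2^k+1) with hc₀def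
    have hc₀lt : c₀ < 2^k+1 := by omega
    have hc₀pos : 0 < c₀ := by omega
    have hdc : (2^k+1) ∣ (c₀ + τ) := by
      refine ⟨1 + τ/(2^k+1), ?_⟩
      have hdm := Nat.div_add_mod τ (2^k+1)
      have h2 : (2^k+1)*(1+τ/(2^k+1)) = (2^k+1) + (2^k+1)*(τ/(2^k+1)) := by ring
      rw [h2]
      set X := (2^k+1)*(τ/(2^k+1)) with hX
      omega
    have hdS0 : g + g^(2^k) ≠ 0 := by
      intro hdd
      have h1 : g + g^(2^k) = α^τ + (α^τ)^(2^k) := by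
        rw [hgdef, add_pow_char_pow, one_pow,
          show (1:F) + α^τ + (1 + (α^τ)^(2^k)) = (1+1) + (α^τ + (α^τ)^(2^k)) by ring,
          CharTwo.add_self_eq_zero, zero_add]
      rw [h1] at hdd
      have h3 : (α^τ)^(2^k) = α^τ := by
        have h2 := eq_neg_of_add_eq_zero_right hdd
        rwa [CharTwo.neg_eq] at h2
      have hne : α^τ ≠ 0 := pow_ne_zero _ hαne
      have h5 : (α^τ)^(2^k-1) = 1 := by
        have h6 : (α^τ)^(2^k-1) * (α^τ) = 1 * (α^τ) := by
          rw [← pow_succ, show 2^k-1+1 = 2^k by omega, h3, one_mul]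
        exact mul_right_cancel₀ hne h6
      have h7 : W ∣ τ * (2^k-1) := by
        rw [← pow_mul] at h5
        exact hαW ▸ orderOf_dvd_of_pow_eq_one h5
      rw [← hQP] at h7
      exact hQτ ((Nat.mul_dvd_mul_iff_right (show 0 < 2^k-1 by omega)).1 h7)
    have hdS1 : (α^c₀*g) + (α^c₀*g)^(2^k) ≠ 0 := by
      intro hdd
      have hexp : α^c₀ * g = α^c₀ + α^(c₀+τ) := by rw [hgdef, mul_add, mul_one, ← pow_add]
      have hh : (α^(c₀+τ))^(2^k) = α^(c₀+τ) := by
        have hpow1 : (α^(c₀+τ))^(2^k-1) = 1 := by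
          rw [← pow_mul]
          obtain ⟨c, hc⟩ : W ∣ (c₀+τ)*(2^k-1) := by
            rw [← hQP]
            exact Nat.mul_dvd_mul hdc dvd_rfl
          rw [hc, pow_mul, hαW1, one_pow]
        calc (α^(c₀+τ))^(2^k) = (α^(c₀+τ))^(2^k-1) * α^(c₀+τ) := by
              rw [← pow_succ]
              congr 1
              omega
        _ = α^(c₀+τ) := by rw [hpow1, one_mul]
      rw [hexp, add_pow_char_pow, hh] at hdd
      have h2 : (α^c₀) + (α^c₀)^(2^k) = 0 := by
        have h1 : α^c₀ + α^(c₀+τ) + ((α^c₀)^(2^k) + α^(c₀+τ))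
            = (α^c₀ + (α^c₀)^(2^k)) + (α^(c₀+τ) + α^(c₀+τ)) := by ring
        rw [h1, CharTwo.add_self_eq_zero, add_zero] at hdd
        exact hdd
      have h3 : (α^c₀)^(2^k) = α^c₀ := by
        have h9 := eq_neg_of_add_eq_zero_right h2
        rwa [CharTwo.neg_eq] at h9
      have hc0ne : α^c₀ ≠ 0 := pow_ne_zero _ hαne
      have h5 : (α^c₀)^(2^k-1) = 1 := by
        have h6 : (α^c₀)^(2^k-1) * α^c₀ = 1 * α^c₀ := by
          rw [← pow_succ, show 2^k-1+1 = 2^k by omega, h3, one_mul]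
        exact mul_right_cancel₀ hc0ne h6
      have h7 : W ∣ c₀ * (2^k-1) := by
        rw [← pow_mul] at h5
        exact hαW ▸ orderOf_dvd_of_pow_eq_one h5
      rw [← hQP] at h7
      have h8 := (Nat.mul_dvd_mul_iff_right (show 0 < 2^k-1 by omega)).1 h7
      have h9 := Nat.le_of_dvd hc₀pos h8
      omega
    have hS0 : ∑ j ∈ range W, (if (2^k+1) ∣ j then f j else 0) = -1 := by
      rw [← Finset.sum_filter, show range W = range ((2^k+1)*(2^k-1)) by rw [hQP],
        yg_filter_dvd (2^k+1) (2^k-1) (by positivity),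
        Finset.sum_image (fun a _ b _ hab => Nat.eq_of_mul_eq_mul_left (by positivity) hab)]
      have hcong : ∀ m ∈ range (2^k-1),
          f ((2^k+1)*m) = ygeps (Algebra.trace (ZMod 2) F ((α^(2^k+1))^m * g)) := by
        intro m _
        rw [hfdef]
        simp only
        rw [pow_mul]
      rw [Finset.sum_congr rfl hcong]
      exact yg_S_K F k hk hF α hα hdS0
    have hS1 : ∑ j ∈ range W, (if (2^k+1) ∣ (j+τ) then f j else 0) = -1 := by
      rw [← Finset.sum_filter, show range W = range ((2^k+1)*(2^k-1)) by rw [hQP],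
        yg_filter_dvd_shift (2^k+1) (2^k-1) τ c₀ (by positivity) hc₀lt hdc,
        Finset.sum_image (fun a _ b _ hab =>
          Nat.eq_of_mul_eq_mul_left (show 0 < 2^k+1 by positivity) (by omega))]
      have hcong : ∀ m ∈ range (2^k-1),
          f ((2^k+1)*m + c₀)
            = ygeps (Algebra.trace (ZMod 2) F ((α^(2^k+1))^m * (α^c₀ * g))) := by
        intro m _
        rw [hfdef]
        simp only
        rw [pow_add, pow_mul, mul_assoc]
      rw [Finset.sum_congr rfl hcong]
      exact yg_S_K F k hk hF α hα hdS1
    have hd12 : ∀ j : ℕ, (2^k+1) ∣ j → (2^k+1) ∣ (j+τ) → False := by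
      intro j d1 d2
      have h5 := Nat.dvd_sub d2 d1
      rw [show j+τ-j = τ by omega] at h5
      exact hQτ h5
    rcases (by omega : τ % 4 = 2 ∨ τ % 4 = 0 ∨ (τ % 4 = 1 ∨ τ % 4 = 3)) with hm4|hm4|hm4
    · -- τ ≡ 2 : AC = 0
      have hτZ : (τ:ℤ) % 4 = 2 := by omega
      have hpt : ∀ j ∈ range W, (if ((τ:ℤ) + δ*((if (2^k+1) ∣ j then (1:ℤ) else 0)
            - (if (2^k+1) ∣ (j+τ) then (1:ℤ) else 0)))%4 = 0 then f j else 0) = 0 := by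
        intro j _
        rw [if_neg]
        by_cases d1 : (2^k+1) ∣ j <;> by_cases d2 : (2^k+1) ∣ (j+τ) <;>
          [rw [if_pos d1, if_pos d2]; rw [if_pos d1, if_neg d2];
           rw [if_neg d1, if_pos d2]; rw [if_neg d1, if_neg d2]] <;>
          rcases hδ with rfl|rfl <;> omega
      rw [Finset.sum_congr rfl hpt]
      rw [if_pos hm4]
      simp
    · -- τ ≡ 0 mod 4, ¬Q∣τ : AC = 4
      have hτZ : (τ:ℤ) % 4 = 0 := by omega
      have hpt : ∀ j ∈ range W, (if ((τ:ℤ) + δ*((if (2^k+1) ∣ j then (1:ℤ) else 0)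
            - (if (2^k+1) ∣ (j+τ) then (1:ℤ) else 0)))%4 = 0 then f j else 0)
          = f j - (if (2^k+1) ∣ j then f j else 0) - (if (2^k+1) ∣ (j+τ) then f j else 0) := by
        intro j _
        by_cases d1 : (2^k+1) ∣ j <;> by_cases d2 : (2^k+1) ∣ (j+τ)
        · exact (hd12 j d1 d2).elim
        · rw [if_pos d1, if_neg d2, if_pos d1, if_neg d2,
            if_neg (by rcases hδ with rfl|rfl <;> omega)]
          ring
        · rw [if_neg d1, if_pos d2, if_neg d1, if_pos d2,
            if_neg (by rcases hδ with rfl|rfl <;> omega)]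
          ring
        · rw [if_neg d1, if_neg d2, if_neg d1, if_neg d2, if_pos (by omega)]
          ring
      rw [Finset.sum_congr rfl hpt, Finset.sum_sub_distrib, Finset.sum_sub_distrib,
        hSfull hg, hS0, hS1]
      rw [if_neg (by omega), if_pos hm4, if_neg hQτ]
      norm_num
    · -- τ odd : AC = -4
      have hτZ : (τ:ℤ) % 4 = 1 ∨ (τ:ℤ) % 4 = 3 := by omega
      rcases (by rcases hδ with rfl|rfl <;> omega :
          ((τ:ℤ) + δ) % 4 = 0 ∨ ((τ:ℤ) - δ) % 4 = 0) with hcs|hcs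
      · -- cond ⟺ Q ∣ j
        have hpt : ∀ j ∈ range W, (if ((τ:ℤ) + δ*((if (2^k+1) ∣ j then (1:ℤ) else 0)
              - (if (2^k+1) ∣ (j+τ) then (1:ℤ) else 0)))%4 = 0 then f j else 0)
            = (if (2^k+1) ∣ j then f j else 0) := by
          intro j _
          by_cases d1 : (2^k+1) ∣ j <;> by_cases d2 : (2^k+1) ∣ (j+τ)
          · exact (hd12 j d1 d2).elim
          · rw [if_pos d1, if_neg d2, if_pos (by rcases hδ with rfl|rfl <;> omega), if_pos d1]
          · rw [if_neg d1, if_pos d2, if_neg (by rcases hδ with rfl|rfl <;> omega), if_neg d1]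
          · rw [if_neg d1, if_neg d2, if_neg (by omega), if_neg d1]
        rw [Finset.sum_congr rfl hpt, hS0]
        rw [if_neg (by omega), if_neg (by omega), if_neg hQτ]
        norm_num
      · -- cond ⟺ Q ∣ (j+τ)
        have hpt : ∀ j ∈ range W, (if ((τ:ℤ) + δ*((if (2^k+1) ∣ j then (1:ℤ) else 0)
              - (if (2^k+1) ∣ (j+τ) then (1:ℤ) else 0)))%4 = 0 then f j else 0)
            = (if (2^k+1) ∣ (j+τ) then f j else 0) := by
          intro j _
          by_cases d1 : (2^k+1) ∣ j <;> by_cases d2 : (2^k+1) ∣ (j+τ)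
          · exact (hd12 j d1 d2).elim
          · rw [if_pos d1, if_neg d2, if_neg (by rcases hδ with rfl|rfl <;> omega), if_neg d2]
          · rw [if_neg d1, if_pos d2, if_pos (by rcases hδ with rfl|rfl <;> omega), if_pos d2]
          · rw [if_neg d1, if_neg d2, if_neg (by omega), if_neg d2]
        rw [Finset.sum_congr rfl hpt, hS1]
        rw [if_neg (by omega), if_neg (by omega), if_neg hQτ]
        norm_num

theorem stmt1
    (k : ℕ) (hk : 1 < k)
    (δ : ℤ) (hδ : δ = 1 ∨ δ = -1)
    (W N : ℕ) (hW : W = 2 ^ (2 * k) - 1) (hN : N = 4 * W)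
    (F : Type) [Field F] [Fintype F] [Algebra (ZMod 2) F]
    (hF : Fintype.card F = 2 ^ (2 * k))
    (α : F) (hα : orderOf α = 2 ^ (2 * k) - 1)
    (b : ℕ → ZMod 2) (hb : ∀ j, b j = Algebra.trace (ZMod 2) F (α ^ j))
    (e : ℕ → ℤ)
    (he : ∀ i r : ℕ, i ≤ 2 ^ k - 2 → r ≤ 2 ^ k →
      e ((2 ^ k + 1) * i + r) =
        if r = 0 then (3 * (i : ℤ) + δ) % 4 else (3 * ((i : ℤ) + (r : ℤ))) % 4)
    (s : ℕ → ZMod 2)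
    (hs : ∀ i j : ℕ, i ≤ 3 → j ≤ W - 1 →
      s (i * W + j) = (if ((i : ℤ) + e j) % 4 = 0 then 0 else 1) + b j)
    (AC : ℕ → ℤ)
    (hAC : ∀ τ, AC τ = ∑ t ∈ Finset.range N, if s t = s ((t + τ) % N) then (1 : ℤ) else -1)
    :
    (∀ τ₁ τ₂ : ℕ, 1 ≤ τ₁ → τ₁ ≤ N - 1 → 1 ≤ τ₂ → τ₂ ≤ N - 1 →
      τ₁ % (4 * (2 ^ k + 1)) = τ₂ % (4 * (2 ^ k + 1)) → AC τ₁ = AC τ₂) ∧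
    (∀ i : ℕ, 1 ≤ i → i ≤ 2 ^ k - 2 → AC (4 * (2 ^ k + 1) * i) = -4) := by
  constructor
  · intro τ₁ τ₂ h11 h12 h21 h22 hmod
    rw [yg_master k hk δ hδ W N hW hN F hF α hα b hb e he s hs AC hAC τ₁ h11 h12,
        yg_master k hk δ hδ W N hW hN F hF α hα b hb e he s hs AC hAC τ₂ h21 h22]
    have h4Q : τ₁ % 4 = τ₂ % 4 := by
      have e1 : τ₁ % (4*(2^k+1)) % 4 = τ₁ % 4 := Nat.mod_mod_of_dvd τ₁ ⟨2^k+1, rfl⟩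
      have e2 : τ₂ % (4*(2^k+1)) % 4 = τ₂ % 4 := Nat.mod_mod_of_dvd τ₂ ⟨2^k+1, rfl⟩
      omega
    have hdQ : ((2^k+1) ∣ τ₁) ↔ ((2^k+1) ∣ τ₂) := by
      have key : ∀ τ : ℕ, (2^k+1) ∣ τ ↔ (2^k+1) ∣ (τ % (4*(2^k+1))) := by
        intro τ
        have hdm := Nat.div_add_mod τ (4*(2^k+1))
        have hQM : (2^k+1) ∣ (4*(2^k+1)) * (τ/(4*(2^k+1))) :=
          Dvd.dvd.mul_right (Dvd.dvd.mul_left dvd_rfl 4) _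
        constructor
        · intro h
          have h5 := Nat.dvd_sub h hQM
          rwa [show τ - (4*(2^k+1))*(τ/(4*(2^k+1))) = τ % (4*(2^k+1)) by omega] at h5
        · intro h
          rw [← hdm]
          exact dvd_add hQM h
      rw [key τ₁, key τ₂, hmod]
    rw [h4Q]
    simp only [hdQ]
  · intro i hi1 hi2
    have h4 := yg_pk4 k hk
    have h16 := yg_W16 k hk
    have hQP : (2^k+1) * (2^k-1) = W := by rw [hW]; exact yg_QP k (by omega)
    have hb1 : 1 ≤ 4*(2^k+1)*i := by
      have h0 : 0 < 4*(2^k+1)*i := Nat.mul_pos (by positivity) (by omega)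
      omega
    have hb2 : 4*(2^k+1)*i ≤ N - 1 := by
      have h1 : (2^k+1)*i ≤ (2^k+1)*(2^k-2) := Nat.mul_le_mul_left _ hi2
      have h2 : (2^k+1)*(2^k-1) = (2^k+1)*(2^k-2) + (2^k+1) := by
        rw [show 2^k-1 = (2^k-2)+1 by omega, Nat.mul_add, Nat.mul_one]
      rw [show 4*(2^k+1)*i = 4*((2^k+1)*i) by ring]
      omega
    rw [yg_master k hk δ hδ W N hW hN F hF α hα b hb e he s hs AC hAC _ hb1 hb2]
    have hmod0 : (4*(2^k+1)*i) % 4 = 0 := by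
      rw [show 4*(2^k+1)*i = 4*((2^k+1)*i) by ring]
      exact Nat.mul_mod_right 4 _
    have hdvd : (2^k+1) ∣ 4*(2^k+1)*i := ⟨4*i, by ring⟩
    rw [if_neg (by omega), if_pos hmod0, if_pos hdvd]
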